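/- Let A ∈ ℂ^{m×n}, b ∈ ℂ^m, μ > 0. Then strong duality holds between the unconstrained basis pursuit denoising problem and its dual: the minimum over x ∈ ℂ^n of ‖x‖₁ + (1/(2μ))‖A x − b‖₂² equals the maximum over y ∈ ℂ^m with ‖A*y‖_∞ ≤ 1 of Re(b*y) − (μ/2)‖y‖₂², and both the minimum and the maximum are attained. -/

import Mathlib

open Filter Topology Matrix Finset

noncomputable def l1 {ι : Type*} [Fintype ι] (v : ι → ℂ) : ℝ := ∑ i, ‖v i‖

noncomputable def l2sq {ι : Type*} [Fintype ι] (v : ι → ℂ) : ℝ := ∑ i, ‖v i‖^2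

noncomputable def l2 {ι : Type*} [Fintype ι] (v : ι → ℂ) : ℝ := Real.sqrt (l2sq v)

noncomputable def linf {ι : Type*} [Fintype ι] (v : ι → ℂ) : ℝ := ⨆ i, ‖v i‖

noncomputable def csign (w : ℂ) : ℂ := if w = 0 then 0 else w / (‖w‖ : ℂ)

noncomputable def shrink {ι : Type*} [Fintype ι] (z : ι → ℂ) (ν : ℝ) : ι → ℂ :=
  fun i => ((max (‖z i‖ - ν) 0 : ℝ) : ℂ) * csign (z i)

noncomputable def reInner {ι : Type*} [Fintype ι] (y v : ι → ℂ) : ℝ :=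
  (∑ i, (starRingEnd ℂ) (y i) * v i).re

noncomputable def projBall {ι : Type*} [Fintype ι] (t : ℝ) (v : ι → ℂ) : ι → ℂ :=
  if l2 v ≤ t then v else (t / l2 v) • v

noncomputable def projBox {ι : Type*} [Fintype ι] (v : ι → ℂ) : ι → ℂ :=
  fun i => if ‖v i‖ ≤ 1 then v i else v i / (‖v i‖ : ℂ)

noncomputable def lmax {m n : ℕ} (A : Matrix (Fin m) (Fin n) ℂ) : ℝ :=
  ⨆ i, (Matrix.isHermitian_conjTranspose_mul_self A).eigenvalues i

lemma re_conj_mul (a b : ℂ) : ((starRingEnd ℂ) a * b).re = ((starRingEnd ℂ) b * a).re := by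
  rw [← Complex.conj_re ((starRingEnd ℂ) b * a)]
  simp [mul_comm]

lemma reInner_comm {ι : Type*} [Fintype ι] (u v : ι → ℂ) : reInner u v = reInner v u := by
  simp only [reInner, Complex.re_sum]
  exact Finset.sum_congr rfl fun i _ => re_conj_mul _ _

lemma l2sq_nonneg {ι : Type*} [Fintype ι] (v : ι → ℂ) : 0 ≤ l2sq v :=
  Finset.sum_nonneg fun i _ => sq_nonneg _

lemma l1_nonneg {ι : Type*} [Fintype ι] (v : ι → ℂ) : 0 ≤ l1 v :=
  Finset.sum_nonneg fun i _ => (norm_nonneg _)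

lemma l2sq_add {ι : Type*} [Fintype ι] (u v : ι → ℂ) :
    l2sq (fun i => u i + v i) = l2sq u + 2 * reInner u v + l2sq v := by
  simp only [l2sq, reInner, Complex.re_sum, Complex.sq_norm, Finset.mul_sum,
    ← Finset.sum_add_distrib]
  refine Finset.sum_congr rfl fun i _ => ?_
  rw [Complex.normSq_add]
  have h2 : (u i * (starRingEnd ℂ) (v i)).re = ((starRingEnd ℂ) (u i) * v i).re := by
    rw [← Complex.conj_re (u i * (starRingEnd ℂ) (v i))]; simp [mul_comm]
  rw [h2]; ring

lemma reInner_smul_right {ι : Type*} [Fintype ι] (t : ℝ) (u v : ι → ℂ) :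
    reInner u (fun i => (t:ℂ) * v i) = t * reInner u v := by
  simp only [reInner, Complex.re_sum, Finset.mul_sum]
  refine Finset.sum_congr rfl fun i _ => ?_
  rw [show (starRingEnd ℂ) (u i) * ((t:ℂ) * v i) = (t:ℂ) * ((starRingEnd ℂ) (u i) * v i) by ring,
    Complex.re_ofReal_mul]

lemma l2sq_smul_real {ι : Type*} [Fintype ι] (t : ℝ) (v : ι → ℂ) :
    l2sq (fun i => (t:ℂ) * v i) = t^2 * l2sq v := by
  simp only [l2sq, Finset.mul_sum, norm_mul, Complex.norm_real, Real.norm_eq_abs, mul_pow, _root_.sq_abs]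

lemma reInner_adjoint {m n : ℕ} (A : Matrix (Fin m) (Fin n) ℂ) (y : Fin m → ℂ) (x : Fin n → ℂ) :
    reInner (Aᴴ.mulVec y) x = reInner y (A.mulVec x) := by
  unfold reInner
  congr 1
  simp only [Matrix.mulVec, dotProduct, Matrix.conjTranspose_apply, map_sum,
    _root_.map_mul, Finset.sum_mul, Finset.mul_sum]
  rw [Finset.sum_comm]
  refine Finset.sum_congr rfl fun i _ => Finset.sum_congr rfl fun j _ => ?_
  simp only [RCLike.star_def, Complex.conj_conj]
  ring

lemma reInner_single {ι : Type*} [Fintype ι] [DecidableEq ι] (u : ι → ℂ) (j : ι) (c : ℂ) :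
    reInner u (Pi.single j c) = ((starRingEnd ℂ) (u j) * c).re := by
  simp only [reInner]
  rw [Finset.sum_eq_single j]
  · simp
  · intro i _ hij; simp [Pi.single_apply, hij]
  · simp

lemma abs_le_l1 {ι : Type*} [Fintype ι] (x : ι → ℂ) (i : ι) : ‖x i‖ ≤ l1 x :=
  Finset.single_le_sum (fun i _ => norm_nonneg (x i)) (Finset.mem_univ i)

lemma reInner_le_l1 {ι : Type*} [Fintype ι] (g x : ι → ℂ) (h : ∀ j, ‖g j‖ ≤ 1) :
    reInner g x ≤ l1 x := by
  simp only [reInner, Complex.re_sum, l1]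
  refine Finset.sum_le_sum fun i _ => ?_
  calc ((starRingEnd ℂ) (g i) * x i).re ≤ ‖(starRingEnd ℂ) (g i) * x i‖ :=
        Complex.re_le_norm _
    _ = ‖g i‖ * ‖x i‖ := by rw [norm_mul, Complex.norm_conj]
    _ ≤ 1 * ‖x i‖ := by
        exact mul_le_mul_of_nonneg_right (h i) (norm_nonneg _)
    _ = ‖x i‖ := one_mul _

lemma aux1 {s C : ℝ} (hC : 0 ≤ C) (h : ∀ t : ℝ, 0 < t → t * s ≤ t + t^2 * C) : s ≤ 1 := by
  refine le_of_forall_pos_le_add fun ε hε => ?_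
  rcases eq_or_lt_of_le hC with hC0 | hC0
  · have := h 1 one_pos; nlinarith
  · have ht : 0 < ε / C := div_pos hε hC0
    have := h (ε / C) ht
    have hc : (ε/C) * C = ε := div_mul_cancel₀ ε (ne_of_gt hC0)
    nlinarith

lemma aux2 {a B : ℝ} (hB : 0 ≤ B) (h : ∀ t : ℝ, 0 < t → t ≤ 1 → t * a ≤ t^2 * B) : a ≤ 0 := by
  have : ∀ ε : ℝ, 0 < ε → a ≤ 0 + ε := by
    intro ε hε
    set t := min 1 (ε / (B+1)) with ht
    have htpos : 0 < t := lt_min one_pos (div_pos hε (by linarith))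
    have ht1 : t ≤ 1 := min_le_left _ _
    have ht2 : t ≤ ε / (B+1) := min_le_right _ _
    have := h t htpos ht1
    have hb : t * B ≤ ε := by
      have : t * (B+1) ≤ ε := by
        rw [← div_mul_cancel₀ ε (show (B:ℝ)+1 ≠ 0 by linarith)]
        exact mul_le_mul_of_nonneg_right ht2 (by linarith)
      nlinarith
    nlinarith
  exact le_of_forall_pos_le_add this
lemma l1_update {ι : Type*} [Fintype ι] [DecidableEq ι] (x : ι → ℂ) (j : ι) (w : ℂ) :
    l1 (Function.update x j w) = l1 x - ‖x j‖ + ‖w‖ := by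
  have h1 : (fun i => ‖Function.update x j w i‖)
      = Function.update (fun i => ‖x i‖) j (‖w‖) := by
    funext i; by_cases h : i = j <;> simp [h, Function.update]
  have h2 := Finset.sum_update_of_mem (Finset.mem_univ j) (fun i => ‖x i‖)
    (‖w‖)
  have h3 : ∑ i, ‖x i‖ = ‖x j‖ + ∑ i ∈ Finset.univ \ {j}, ‖x i‖ := by
    rw [Finset.sum_eq_sum_sdiff_singleton_add (Finset.mem_univ j)]; ring
  simp only [l1]
  calc ∑ i, ‖Function.update x j w i‖
      = ∑ i, Function.update (fun i => ‖x i‖) j (‖w‖) i := by rw [← h1]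
    _ = ‖w‖ + ∑ i ∈ Finset.univ \ {j}, ‖x i‖ := h2
    _ = _ := by rw [h3]; ring

lemma add_single_eq_update {ι : Type*} [Fintype ι] [DecidableEq ι] (x : ι → ℂ) (j : ι) (c : ℂ) :
    (x + Pi.single j c) = Function.update x j (x j + c) := by
  funext i; by_cases h : i = j <;> simp [h, Function.update, Pi.single_apply]

lemma mulVec_continuous {m n : ℕ} (A : Matrix (Fin m) (Fin n) ℂ) (i : Fin m) :
    Continuous fun x : Fin n → ℂ => A.mulVec x i := by
  simp only [Matrix.mulVec, dotProduct]
  exact continuous_finset_sum _ fun j _ => continuous_const.mul (continuous_apply j)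

lemma P_continuous {m n : ℕ} (A : Matrix (Fin m) (Fin n) ℂ) (b : Fin m → ℂ) (μ : ℝ) :
    Continuous fun x : Fin n → ℂ => l1 x + (1/(2*μ)) * l2sq (A.mulVec x - b) := by
  apply Continuous.add
  · exact continuous_finset_sum _ fun i _ =>
      continuous_norm.comp (continuous_apply i)
  · apply continuous_const.mul
    apply continuous_finset_sum _ fun i _ => ?_
    have : Continuous fun x : Fin n → ℂ => A.mulVec x i - b i :=
      (mulVec_continuous A i).sub continuous_const
    exact (continuous_norm.comp this).pow 2

lemma reInner_sub_right {ι : Type*} [Fintype ι] (y u w : ι → ℂ) :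
    reInner y (fun i => u i - w i) = reInner y u - reInner y w := by
  simp only [reInner, Complex.re_sum, mul_sub, Finset.sum_sub_distrib, Complex.sub_re]

lemma duality_gap {m n : ℕ} (A : Matrix (Fin m) (Fin n) ℂ) (b : Fin m → ℂ) (μ : ℝ)
    (hμ : 0 < μ) (x : Fin n → ℂ) (y : Fin m → ℂ) :
    (l1 x + (1/(2*μ)) * l2sq (A.mulVec x - b)) - (reInner b y - (μ/2) * l2sq y)
      = (l1 x - reInner (Aᴴ.mulVec y) x)
        + (1/(2*μ)) * l2sq (fun i => (A.mulVec x - b) i + (μ:ℂ) * y i) := by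
  have hexp := l2sq_add (A.mulVec x - b) (fun i => (μ:ℂ) * y i)
  have hs := reInner_smul_right μ (A.mulVec x - b) y
  have hl := l2sq_smul_real μ y
  have hlin : reInner (A.mulVec x - b) y = reInner (Aᴴ.mulVec y) x - reInner b y := by
    rw [reInner_comm]
    have : (A.mulVec x - b) = fun i => A.mulVec x i - b i := rfl
    rw [this, reInner_sub_right, ← reInner_adjoint, reInner_comm y b]
  rw [hexp, hs, hl, hlin]
  have hμ' : μ ≠ 0 := ne_of_gt hμ
  field_simp
  ring

/-- Strong duality between QP_mu and its dual (2.17), both optima attained. -/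
theorem strong_duality_qp {m n : ℕ} (A : Matrix (Fin m) (Fin n) ℂ) (b : Fin m → ℂ)
    (μ : ℝ) (hμ : 0 < μ) :
    let P : (Fin n → ℂ) → ℝ := fun x => l1 x + (1/(2*μ)) * l2sq (A.mulVec x - b)
    let D : (Fin m → ℂ) → ℝ := fun y => reInner b y - (μ/2) * l2sq y
    ∃ (xt : Fin n → ℂ) (yt : Fin m → ℂ),
      (∀ x : Fin n → ℂ, P xt ≤ P x) ∧
      linf (Aᴴ.mulVec yt) ≤ 1 ∧
      (∀ y : Fin m → ℂ, linf (Aᴴ.mulVec y) ≤ 1 → D y ≤ D yt) ∧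
      P xt = D yt := by
  intro P D
  have hPdef : ∀ x, P x = l1 x + (1/(2*μ)) * l2sq (A.mulVec x - b) := fun _ => rfl
  have hDdef : ∀ y, D y = reInner b y - (μ/2) * l2sq y := fun _ => rfl
  have hμ' : μ ≠ 0 := ne_of_gt hμ
  -- existence of a minimizer
  have hPc : Continuous P := P_continuous A b μ
  have hcoer : Tendsto P (cocompact _) atTop := by
    refine tendsto_atTop_mono (fun x => ?_) tendsto_norm_cocompact_atTop
    have h1 : ‖x‖ ≤ l1 x := by
      rw [pi_norm_le_iff_of_nonneg (l1_nonneg x)]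
      intro i
      exact abs_le_l1 x i
    have h2 : 0 ≤ (1/(2*μ)) * l2sq (A.mulVec x - b) :=
      mul_nonneg (by positivity) (l2sq_nonneg _)
    rw [hPdef x]; linarith
  obtain ⟨xt, hxt⟩ := hPc.exists_forall_le hcoer
  -- the dual candidate
  set r : Fin m → ℂ := A.mulVec xt - b with hr
  set yt : Fin m → ℂ := ((-μ⁻¹ : ℝ) : ℂ) • r with hyt
  set g : Fin n → ℂ := Aᴴ.mulVec yt with hg
  have hAr : Aᴴ.mulVec r = fun j => ((-μ : ℝ) : ℂ) * g j := by
    funext j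
    have h1 : g j = ((-μ⁻¹ : ℝ) : ℂ) * (Aᴴ.mulVec r) j := by
      rw [hg, hyt, Matrix.mulVec_smul]; rfl
    have h2 : ((-μ : ℝ):ℂ) * ((-μ⁻¹ : ℝ):ℂ) = 1 := by
      have hμc : (μ:ℂ) ≠ 0 := by exact_mod_cast hμ'
      push_cast
      field_simp
    rw [h1, ← mul_assoc, h2, one_mul]
  -- master inequality from optimality of xt
  have master : ∀ (j : Fin n) (c : ℂ) (t : ℝ), 0 < t →
      t * ((starRingEnd ℂ) (g j) * c).re ≤
        (‖xt j + (t:ℂ) * c‖ - ‖xt j‖)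
          + t^2 * (l2sq (A.mulVec (Pi.single j c)) / (2*μ)) := by
    intro j c t ht
    set w : Fin m → ℂ := A.mulVec (Pi.single j c) with hw
    set x' : Fin n → ℂ := xt + Pi.single j ((t:ℂ) * c) with hx'
    have hsingle : Pi.single j ((t:ℂ) * c) = (t:ℂ) • (Pi.single j c : Fin n → ℂ) := by
      funext i
      by_cases h : i = j <;> simp [h, Pi.single_apply]
    have hl1 : l1 x' = l1 xt - ‖xt j‖ + ‖xt j + (t:ℂ) * c‖ := by
      rw [hx', add_single_eq_update, l1_update]
    have hAx : A.mulVec x' - b = fun i => r i + (t:ℂ) * w i := by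
      funext i
      rw [hx', hsingle]
      simp [Matrix.mulVec_add, Matrix.mulVec_smul, hr, hw, smul_eq_mul]
      ring
    have hl2 : l2sq (A.mulVec x' - b)
        = l2sq r + 2 * (t * reInner r w) + t^2 * l2sq w := by
      rw [hAx]
      have := l2sq_add r (fun i => (t:ℂ) * w i)
      rw [this, reInner_smul_right, l2sq_smul_real]
    have hrw : reInner r w = -μ * ((starRingEnd ℂ) (g j) * c).re := by
      have h1 : reInner r w = reInner (Aᴴ.mulVec r) (Pi.single j c) := by
        rw [reInner_adjoint]
      rw [h1, hAr]
      have h2 : reInner (fun j' => ((-μ : ℝ) : ℂ) * g j') (Pi.single j c)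
          = (((-μ : ℝ) : ℂ) * ((starRingEnd ℂ) (g j) * c)).re := by
        rw [reInner_single]
        congr 1
        rw [_root_.map_mul]
        have : (starRingEnd ℂ) (((-μ : ℝ) : ℂ)) = ((-μ : ℝ) : ℂ) := Complex.conj_ofReal _
        rw [this]
        try ring
      rw [h2, Complex.re_ofReal_mul]
      try ring
    have hineq := hxt x'
    rw [hPdef x', hPdef xt, hl1, hl2, hrw, ← hr] at hineq
    have hc : (1/(2*μ)) * (2 * (t * (-μ * ((starRingEnd ℂ) (g j) * c).re)))
        = -(t * ((starRingEnd ℂ) (g j) * c).re) := by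
      field_simp
      try ring
    have hc2 : (1/(2*μ)) * (t^2 * l2sq w) = t^2 * (l2sq w / (2*μ)) := by ring
    nlinarith [hineq]
  -- feasibility
  have hfeas : ∀ j, ‖g j‖ ≤ 1 := by
    intro j
    by_cases hgj : g j = 0
    · simp [hgj]
    · have habs : ‖g j‖ ≠ 0 := by
        simpa using hgj
      set c : ℂ := g j / (‖g j‖ : ℂ) with hc
      have hcabs : ‖c‖ = 1 := by
        rw [hc, norm_div, Complex.norm_real, Real.norm_eq_abs, abs_of_nonneg (norm_nonneg _),
          div_self habs]
      have hre : ((starRingEnd ℂ) (g j) * c).re = ‖g j‖ := by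
        have hval : (starRingEnd ℂ) (g j) * c = ((‖g j‖ : ℝ) : ℂ) := by
          rw [hc]
          rw [div_eq_mul_inv, ← mul_assoc, mul_comm ((starRingEnd ℂ) (g j)) (g j),
            Complex.mul_conj]
          rw [← Complex.sq_norm]
          have hne : ((‖g j‖ : ℝ) : ℂ) ≠ 0 := by exact_mod_cast habs
          push_cast
          rw [sq]
          field_simp
        rw [hval, Complex.ofReal_re]
      set C : ℝ := l2sq (A.mulVec (Pi.single j c)) / (2*μ) with hC
      have hCnn : 0 ≤ C := div_nonneg (l2sq_nonneg _) (by linarith)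
      refine aux1 hCnn fun t ht => ?_
      have hm := master j c t ht
      rw [hre] at hm
      have htri : ‖xt j + (t:ℂ) * c‖ ≤ ‖xt j‖ + t := by
        calc ‖xt j + (t:ℂ) * c‖
            ≤ ‖xt j‖ + ‖(t:ℂ) * c‖ := norm_add_le _ _
          _ = ‖xt j‖ + t := by
              rw [norm_mul, Complex.norm_real, Real.norm_eq_abs, hcabs, mul_one, abs_of_pos ht]
      nlinarith
  -- complementary slackness
  have hkkt : ∀ j, ‖xt j‖ ≤ ((starRingEnd ℂ) (g j) * xt j).re := by
    intro j
    by_cases hx0 : xt j = 0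
    · simp [hx0]
    · set B : ℝ := l2sq (A.mulVec (Pi.single j (-xt j))) / (2*μ) with hB
      have hBnn : 0 ≤ B := div_nonneg (l2sq_nonneg _) (by linarith)
      have key : ‖xt j‖ - ((starRingEnd ℂ) (g j) * xt j).re ≤ 0 := by
        refine aux2 hBnn fun t ht ht1 => ?_
        have hm := master j (-xt j) t ht
        have h1 : xt j + (t:ℂ) * (-xt j) = (((1 - t : ℝ)) : ℂ) * xt j := by
          push_cast; ring
        have h2 : ‖xt j + (t:ℂ) * (-xt j)‖ = (1 - t) * ‖xt j‖ := by
          rw [h1, norm_mul, Complex.norm_real, Real.norm_eq_abs, abs_of_nonneg (by linarith)]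
        have h3 : ((starRingEnd ℂ) (g j) * (-xt j)).re = -((starRingEnd ℂ) (g j) * xt j).re := by
          simp [mul_neg]
        rw [h2, h3] at hm
        nlinarith
      linarith
  -- equality of reInner g xt and l1 xt
  have hge : l1 xt ≤ reInner g xt := by
    simp only [reInner, Complex.re_sum, l1]
    exact Finset.sum_le_sum fun j _ => hkkt j
  have hle : reInner g xt ≤ l1 xt := reInner_le_l1 _ _ hfeas
  -- gap is zero at (xt, yt)
  have hzero : (fun i => (A.mulVec xt - b) i + (μ:ℂ) * yt i) = fun _ => (0:ℂ) := by
    funext i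
    rw [hyt]
    simp only [Pi.smul_apply, smul_eq_mul, ← hr]
    rw [← mul_assoc]
    have : (μ:ℂ) * ((-μ⁻¹ : ℝ) : ℂ) = -1 := by
      have hμc : (μ:ℂ) ≠ 0 := by exact_mod_cast hμ'
      push_cast
      field_simp
    rw [this]; ring
  have hgapzero := duality_gap A b μ hμ xt yt
  rw [hzero] at hgapzero
  have hl2z : l2sq (fun _ : Fin m => (0:ℂ)) = 0 := by simp [l2sq]
  rw [hl2z] at hgapzero
  have hPD : P xt = D yt := by
    rw [hPdef, hDdef]
    linarith [hgapzero, hge, hle]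
  refine ⟨xt, yt, hxt, ?_, ?_, hPD⟩
  · show (⨆ i, ‖(Aᴴ.mulVec yt) i‖) ≤ 1
    exact Real.iSup_le (fun i => hfeas i) zero_le_one
  · intro y hy
    have hy' : ∀ j, ‖(Aᴴ.mulVec y) j‖ ≤ 1 := by
      intro j
      have hy2 : (⨆ i, ‖(Aᴴ.mulVec y) i‖) ≤ 1 := hy
      refine le_trans ?_ hy2
      exact le_ciSup (Set.Finite.bddAbove (Set.finite_range fun i => ‖(Aᴴ.mulVec y) i‖)) j
    have hgap := duality_gap A b μ hμ xt y
    have h1 : 0 ≤ l1 xt - reInner (Aᴴ.mulVec y) xt :=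
      sub_nonneg.mpr (reInner_le_l1 _ _ hy')
    have h2 : 0 ≤ (1/(2*μ)) * l2sq (fun i => (A.mulVec xt - b) i + (μ:ℂ) * y i) :=
      mul_nonneg (by positivity) (l2sq_nonneg _)
    rw [hDdef y, ← hPD, hPdef xt]
    linarith
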